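/- Let X be a smooth complex projective Calabi-Yau variety of dimension d ≥ 2 and let E and F be spherical objects of D(X) whose spherical twists commute and which are not orthogonal (i.e. Hom(E, F[i]) ≠ 0 for some integer i). Then Φ_E(F) ≅ F[−d]. -/

import Mathlib

/-!
This file formalizes a statement from "Commuting reflection functors and
orthogonal spherical objects".  Mathlib does not have bounded derived categories
of coherent sheaves on smooth projective varieties, so the geometric setting is
axiomatized: `T` plays the role of the bounded derived category `D(X)` of a
smooth complex projective variety `X` — a ℂ-linear triangulated category with
finite-dimensional, bounded graded Hom's — and the Calabi-Yau condition is
expressed by Serre duality in the form of a perfect trace pairing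
`Hom(A,B) × Hom(B,A⟦d⟧) → ℂ`.
-/

open CategoryTheory Limits Pretriangulated Module

universe v u

namespace SphericalPaper

variable (T : Type u) [Category.{v} T] [Preadditive T] [Linear ℂ T]
  [HasZeroObject T] [HasShift T ℤ] [∀ n : ℤ, (shiftFunctor T n).Additive]
  [Pretriangulated T] [HasFiniteBiproducts T]

/-- Hom-finiteness and boundedness of the graded Hom's, as holds in the bounded
derived category of coherent sheaves on a smooth complex projective variety. -/
class HomFiniteBounded : Prop where
  finite : ∀ A B : T, FiniteDimensional ℂ (A ⟶ B)
  bounded : ∀ A B : T, ∃ N : ℕ, ∀ i : ℤ, (N : ℤ) < |i| → ∀ f : A ⟶ B⟦i⟧, f = 0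

/-- The Calabi-Yau condition in dimension `d`: the `d`-th shift is a Serre
functor, expressed by trace functionals inducing a perfect pairing
`Hom(A,B) × Hom(B,A⟦d⟧) → ℂ` (Serre duality `Hom(A,B) ≅ Hom(B,A⟦d⟧)^*`). -/
class CalabiYau (d : ℤ) : Type (max u v) where
  tr : ∀ A : T, (A ⟶ A⟦d⟧) →ₗ[ℂ] ℂ
  nondegen_left : ∀ (A B : T) (f : A ⟶ B),
    (∀ g : B ⟶ A⟦d⟧, tr A (f ≫ g) = 0) → f = 0
  nondegen_right : ∀ (A B : T) (g : B ⟶ A⟦d⟧),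
    (∀ f : A ⟶ B, tr A (f ≫ g) = 0) → g = 0

variable {T}

/-- An object `E` is spherical (for dimension `d`) if `Hom(E,E⟦i⟧)` is
one-dimensional for `i = 0` and `i = d` and vanishes for all other `i`. -/
def IsSpherical (d : ℤ) (E : T) : Prop :=
  finrank ℂ (E ⟶ E⟦(0 : ℤ)⟧) = 1 ∧ finrank ℂ (E ⟶ E⟦d⟧) = 1 ∧
    ∀ i : ℤ, i ≠ 0 → i ≠ d → ∀ f : E ⟶ E⟦i⟧, f = 0

/-- The spherical twist `Φ_E` attached to a spherical object `E`, presented by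
its defining natural distinguished triangle
`Φ_E(G) → RHom(E,G) ⊗_ℂ E → G → Φ_E(G)[1]` :
`Φ` is a triangulated autoequivalence, `Ψ` is the functor `G ↦ RHom(E,G) ⊗_ℂ E`
(each `Ψ(G)` is exhibited as a finite biproduct of shifts `E⟦-i⟧` indexed by
bases of the spaces `Hom(E,G⟦i⟧)`, the natural map `Ψ(G) → G` restricting to
evaluation of the corresponding basis vectors, i.e. it is the evaluation map,
which is the Fourier-Mukai description of the twist along the spherical
object). -/
structure SphericalTwist (E : T) where
  Φ : T ⥤ T
  equiv : Φ.IsEquivalence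
  commShift : Φ.CommShift ℤ
  triangulated : letI := commShift; Φ.IsTriangulated
  Ψ : T ⥤ T
  α : Φ ⟶ Ψ
  ε : Ψ ⟶ 𝟭 T
  δ : 𝟭 T ⟶ Φ ⋙ shiftFunctor T (1 : ℤ)
  dist : ∀ G : T, Triangle.mk (α.app G) (ε.app G) (δ.app G) ∈ distTriang T
  m : T → ℕ
  deg : ∀ G : T, Fin (m G) → ℤ
  decomp : ∀ G : T, Ψ.obj G ≅ ⨁ (fun p : Fin (m G) => E⟦-(deg G p)⟧)
  bas : ∀ (G : T) (n : ℤ), Basis {p : Fin (m G) // deg G p = n} ℂ (E ⟶ G⟦n⟧)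
  eval : ∀ (G : T) (p : Fin (m G)),
    biproduct.ι (fun q : Fin (m G) => E⟦-(deg G q)⟧) p ≫ (decomp G).inv ≫ ε.app G =
      ((shiftEquiv' T (-(deg G p)) (deg G p) (neg_add_cancel _)).toAdjunction.homEquiv
        E G).symm (bas G (deg G p) ⟨p, rfl⟩)

/-! ### Auxiliary lemmas -/

set_option linter.unusedSectionVars false

section Aux

variable [HomFiniteBounded T]

/-- If every nonzero endomorphism of `X` is invertible, every endomorphism is a scalar. -/
lemma exists_smul_id {X : T} (h : ∀ f : X ⟶ X, IsIso f ↔ f ≠ 0) (f : X ⟶ X) :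
    ∃ c : ℂ, c • 𝟙 X = f := by
  haveI : FiniteDimensional ℂ (X ⟶ X) := HomFiniteBounded.finite X X
  have h1 : finrank ℂ (X ⟶ X) = 1 := CategoryTheory.finrank_endomorphism_eq_one ℂ h
  have hne : 𝟙 X ≠ (0 : X ⟶ X) := (h (𝟙 X)).mp inferInstance
  exact (finrank_eq_one_iff_of_nonzero' (𝟙 X) hne).mp h1 f

lemma one_ne_zero_of_isIso_iff {X : T} (h : ∀ f : X ⟶ X, IsIso f ↔ f ≠ 0) :
    𝟙 X ≠ (0 : X ⟶ X) := (h (𝟙 X)).mp inferInstance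

/-- a nonzero scalar multiple of an isomorphism is an isomorphism -/
lemma isIso_smul {X Y : T} {c : ℂ} (hc : c ≠ 0) (f : X ⟶ Y) [IsIso f] : IsIso (c • f) := by
  refine ⟨c⁻¹ • inv f, ?_, ?_⟩
  · rw [Linear.smul_comp, Linear.comp_smul, IsIso.hom_inv_id, smul_smul,
      mul_inv_cancel₀ hc, one_smul]
  · rw [Linear.smul_comp, Linear.comp_smul, IsIso.inv_hom_id, smul_smul,
      inv_mul_cancel₀ hc, one_smul]

/-- For a spherical object, the endomorphism space is 1-dimensional. -/
lemma finrank_end_eq_one {d : ℤ} {F : T} (hF : IsSpherical d F) :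
    finrank ℂ (F ⟶ F) = 1 := by
  have e : (F ⟶ F⟦(0:ℤ)⟧) ≃ₗ[ℂ] (F ⟶ F) :=
    Linear.homCongr ℂ (Iso.refl F) ((shiftFunctorZero T ℤ).app F)
  rw [← e.finrank_eq]
  exact hF.1

lemma isIso_iff_ne_zero_of_finrank_one {X : T} (hX : finrank ℂ (X ⟶ X) = 1) :
    ∀ f : X ⟶ X, IsIso f ↔ f ≠ 0 := by
  have hnt : Nontrivial (X ⟶ X) :=
    Module.nontrivial_of_finrank_pos (R := ℂ) (by rw [hX]; norm_num)
  have h1 : 𝟙 X ≠ (0 : X ⟶ X) := by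
    intro h
    obtain ⟨g, hg⟩ := exists_ne (0 : X ⟶ X)
    apply hg
    calc g = 𝟙 X ≫ g := (Category.id_comp g).symm
    _ = 0 := by rw [h, Limits.zero_comp]
  intro f
  constructor
  · rintro hf rfl
    apply h1
    rw [← IsIso.hom_inv_id (0 : X ⟶ X), Limits.zero_comp]
  · intro hf
    obtain ⟨c, hc⟩ := (finrank_eq_one_iff_of_nonzero' (𝟙 X) h1).mp hX f
    have hc0 : c ≠ 0 := by rintro rfl; rw [zero_smul] at hc; exact hf hc.symm
    rw [← hc]
    exact isIso_smul hc0 (𝟙 X)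

/-- Transfer of the "nonzero iff invertible" property along a fully faithful functor
preserving zero morphisms. -/
lemma isIso_iff_ne_zero_map (Φ : T ⥤ T) [Φ.Full] [Φ.Faithful] [Φ.PreservesZeroMorphisms]
    {X : T} (h : ∀ f : X ⟶ X, IsIso f ↔ f ≠ 0) :
    ∀ f : Φ.obj X ⟶ Φ.obj X, IsIso f ↔ f ≠ 0 := by
  intro f
  obtain ⟨g, rfl⟩ := Φ.map_surjective f
  have hzero : Φ.map g = 0 ↔ g = 0 := Φ.map_eq_zero_iff
  constructor
  · intro hf
    have hg : IsIso g := isIso_of_fully_faithful Φ g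
    intro h0
    exact ((h g).mp hg) (hzero.mp h0)
  · intro hf
    have hg : IsIso g := (h g).mpr (fun h0 => hf (hzero.mpr h0))
    infer_instance

/-- If `X` is a retract of a finite biproduct of objects with scalar endomorphisms,
and `X` has scalar endomorphisms and nonzero identity, then `X` is isomorphic to
one of the summands. -/
lemma retract_biproduct_iso {J : Type} [Fintype J] (Z : J → T) {X : T}
    (s : X ⟶ ⨁ Z) (r : ⨁ Z ⟶ X) (hsr : s ≫ r = 𝟙 X) (h1 : 𝟙 X ≠ (0 : X ⟶ X))
    (hX : ∀ f : X ⟶ X, ∃ c : ℂ, c • 𝟙 X = f)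
    (hZ : ∀ (p : J) (f : Z p ⟶ Z p), ∃ c : ℂ, c • 𝟙 (Z p) = f) :
    ∃ p : J, Nonempty (X ≅ Z p) := by
  have key : ∑ p : J, (s ≫ biproduct.π Z p) ≫ (biproduct.ι Z p ≫ r) = 𝟙 X := by
    have : ∑ p : J, (s ≫ biproduct.π Z p) ≫ (biproduct.ι Z p ≫ r)
        = s ≫ (∑ p : J, biproduct.π Z p ≫ biproduct.ι Z p) ≫ r := by
      rw [Preadditive.sum_comp, Preadditive.comp_sum]
      simp only [Category.assoc]
    rw [this, biproduct.total, Category.id_comp, hsr]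
  choose c hc using fun p => hX ((s ≫ biproduct.π Z p) ≫ (biproduct.ι Z p ≫ r))
  have hsum : (∑ p : J, c p) • 𝟙 X = 𝟙 X := by
    calc (∑ p : J, c p) • 𝟙 X = ∑ p : J, c p • 𝟙 X := Finset.sum_smul
    _ = ∑ p : J, (s ≫ biproduct.π Z p) ≫ (biproduct.ι Z p ≫ r) :=
        Finset.sum_congr rfl fun p _ => hc p
    _ = 𝟙 X := key
  have hex : ∃ p, c p ≠ 0 := by
    by_contra hcon
    push_neg at hcon
    apply h1
    rw [← hsum]
    rw [Finset.sum_congr rfl fun p _ => hcon p, Finset.sum_const, smul_zero, zero_smul]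
  obtain ⟨p, hp⟩ := hex
  set a : X ⟶ Z p := s ≫ biproduct.π Z p with ha
  set b : Z p ⟶ X := biproduct.ι Z p ≫ r with hb
  have hab : a ≫ b = c p • 𝟙 X := (hc p).symm
  obtain ⟨μ, hμ⟩ := hZ p (b ≫ a)
  have h2 : (c p * c p) • 𝟙 X = (μ * c p) • 𝟙 X := by
    have e1 : (a ≫ b) ≫ (a ≫ b) = (c p * c p) • 𝟙 X := by
      rw [hab, Linear.smul_comp, Linear.comp_smul, Category.comp_id, smul_smul]
    have e2 : (a ≫ b) ≫ (a ≫ b) = a ≫ (b ≫ a) ≫ b := by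
      simp only [Category.assoc]
    have e3 : a ≫ (b ≫ a) ≫ b = (μ * c p) • 𝟙 X := by
      rw [← hμ, Linear.smul_comp, Category.id_comp, Linear.comp_smul, hab, smul_smul]
    rw [← e1, e2, e3]
  have hcc : μ = c p := by
    have h3 : (c p * c p - μ * c p) • 𝟙 X = 0 := by rw [sub_smul, h2, sub_self]
    rcases smul_eq_zero.mp h3 with h | h
    · have h4 : c p * c p = μ * c p := sub_eq_zero.mp h
      exact (mul_right_cancel₀ hp h4).symm
    · exact absurd h h1
  refine ⟨p, ⟨⟨a, (c p)⁻¹ • b, ?_, ?_⟩⟩⟩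
  · rw [Linear.comp_smul, hab, smul_smul, inv_mul_cancel₀ hp, one_smul]
  · rw [Linear.smul_comp, ← hμ, hcc, smul_smul, inv_mul_cancel₀ hp, one_smul]

/-- The degrees appearing in the twist decomposition of a spherical object are `0` or `d`. -/
lemma deg_self_mem {d : ℤ} {F : T} (hF : IsSpherical d F) (tF : SphericalTwist F)
    (p : Fin (tF.m F)) : tF.deg F p = 0 ∨ tF.deg F p = d := by
  by_contra hcon
  push_neg at hcon
  exact (tF.bas F (tF.deg F p)).ne_zero ⟨p, rfl⟩ (hF.2.2 _ hcon.1 hcon.2 _)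

/-- A nonzero map `F ⟶ F⟦n⟧` with `n = 0` is an isomorphism, provided the degree-zero
self-Hom space is 1-dimensional. -/
lemma isIso_of_deg_zero {F : T} {n : ℤ} (hn : n = 0)
    (hfr : finrank ℂ (F ⟶ F⟦(0:ℤ)⟧) = 1) (v : F ⟶ F⟦n⟧) (hv : v ≠ 0) : IsIso v := by
  subst hn
  set ζ : F ⟶ F⟦(0:ℤ)⟧ := (shiftFunctorZero T ℤ).inv.app F with hζdef
  have hζ : ζ ≠ 0 := by
    intro h
    have hid : 𝟙 F = (0 : F ⟶ F) := by
      have h2 := (shiftFunctorZero T ℤ).inv_hom_id_app F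
      rw [← hζdef, h, Limits.zero_comp] at h2
      exact h2.symm
    have hall : ∀ w : F ⟶ F⟦(0:ℤ)⟧, w = (0 : F ⟶ F⟦(0:ℤ)⟧) := fun w => by
      rw [← Category.id_comp w, hid, Limits.zero_comp]
    haveI := subsingleton_of_forall_eq (0 : F ⟶ F⟦(0:ℤ)⟧) fun w => hall w
    rw [finrank_zero_of_subsingleton] at hfr
    exact one_ne_zero hfr.symm
  obtain ⟨c, hc⟩ := (finrank_eq_one_iff_of_nonzero' ζ hζ).mp hfr v
  have hc0 : c ≠ 0 := by rintro rfl; rw [zero_smul] at hc; exact hv hc.symm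
  rw [← hc]
  exact isIso_smul hc0 ζ

/-- Maps into a finite biproduct, as a product of Hom-spaces. -/
noncomputable def biproductHomLEquiv {J : Type} [Fintype J] (W : T) (Z : J → T) :
    (W ⟶ ⨁ Z) ≃ₗ[ℂ] Π p, (W ⟶ Z p) where
  toFun f := fun p => f ≫ biproduct.π Z p
  map_add' f g := by funext p; simp [Preadditive.add_comp]
  map_smul' c f := by funext p; simp [Linear.smul_comp]
  invFun g := biproduct.lift g
  left_inv f := by apply biproduct.hom_ext; intro p; simp
  right_inv g := by funext p; simp

/-- The sum of the Hom-space dimensions out of a spherical `F` into the twist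
decomposition of `F` itself is `1`. -/
lemma finrank_hom_into_PsiF {d : ℕ} (hd : 2 ≤ d) {F : T} (hF : IsSpherical (d:ℤ) F)
    (tF : SphericalTwist F) : finrank ℂ (F ⟶ tF.Ψ.obj F) = 1 := by
  haveI : ∀ A B : T, FiniteDimensional ℂ (A ⟶ B) := HomFiniteBounded.finite
  have e1 : (F ⟶ tF.Ψ.obj F) ≃ₗ[ℂ] (F ⟶ ⨁ fun p : Fin (tF.m F) => F⟦-(tF.deg F p)⟧) :=
    Linear.homCongr ℂ (Iso.refl F) (tF.decomp F)
  have e2 := biproductHomLEquiv F (fun p : Fin (tF.m F) => F⟦-(tF.deg F p)⟧)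
  rw [e1.finrank_eq, e2.finrank_eq, Module.finrank_pi_fintype ℂ]
  have hcard : finrank ℂ (F ⟶ F⟦(0:ℤ)⟧) = Fintype.card {p : Fin (tF.m F) // tF.deg F p = 0} :=
    finrank_eq_card_basis (tF.bas F 0)
  have hterm : ∀ p : Fin (tF.m F),
      finrank ℂ (F ⟶ F⟦-(tF.deg F p)⟧) = if tF.deg F p = 0 then 1 else 0 := by
    intro p
    rcases deg_self_mem hF tF p with h | h
    · rw [if_pos h, h, neg_zero]
      exact hF.1
    · rw [if_neg (by rw [h]; omega), h]
      have hz : ∀ w : F ⟶ F⟦-(d:ℤ)⟧, w = (0 : F ⟶ F⟦-(d:ℤ)⟧) := fun w =>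
        hF.2.2 _ (by omega) (by omega) w
      haveI := subsingleton_of_forall_eq (0 : F ⟶ F⟦-(d:ℤ)⟧) fun w => hz w
      exact finrank_zero_of_subsingleton
  calc (∑ p : Fin (tF.m F), finrank ℂ (F ⟶ F⟦-(tF.deg F p)⟧))
      = ∑ p : Fin (tF.m F), if tF.deg F p = 0 then 1 else 0 :=
        Finset.sum_congr rfl fun p _ => hterm p
    _ = (Finset.filter (fun p : Fin (tF.m F) => tF.deg F p = 0) Finset.univ).card :=
        (Finset.card_filter _ _).symm
    _ = Fintype.card {p : Fin (tF.m F) // tF.deg F p = 0} := (Fintype.card_subtype _).symm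
    _ = 1 := by rw [← hcard, hF.1]

/-- Step A: the spherical twist sends the spherical object to its `-d`-th shift. -/
lemma twist_self {d : ℕ} (hd : 2 ≤ d) {F : T} (hF : IsSpherical (d:ℤ) F)
    (tF : SphericalTwist F) : Nonempty (tF.Φ.obj F ≅ F⟦-(d:ℤ)⟧) := by
  haveI := tF.equiv
  haveI : ∀ A B : T, FiniteDimensional ℂ (A ⟶ B) := HomFiniteBounded.finite
  have hiso_F : ∀ f : F ⟶ F, IsIso f ↔ f ≠ 0 :=
    isIso_iff_ne_zero_of_finrank_one (finrank_end_eq_one hF)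
  -- the evaluation component at a degree-zero index is an isomorphism
  have hnt : Nontrivial (F ⟶ F⟦(0:ℤ)⟧) :=
    Module.nontrivial_of_finrank_pos (R := ℂ) (by rw [hF.1]; norm_num)
  obtain ⟨p₀⟩ := (tF.bas F 0).index_nonempty
  set Z : Fin (tF.m F) → T := fun p => F⟦-(tF.deg F p)⟧ with hZdef
  set e₀ : Z p₀.1 ⟶ F :=
    biproduct.ι (fun q : Fin (tF.m F) => F⟦-(tF.deg F q)⟧) p₀.1 ≫ (tF.decomp F).inv
      ≫ tF.ε.app F with he₀def
  have hv : IsIso (tF.bas F (tF.deg F p₀.1) ⟨p₀.1, rfl⟩) :=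
    isIso_of_deg_zero p₀.2 hF.1 _ ((tF.bas F (tF.deg F p₀.1)).ne_zero ⟨p₀.1, rfl⟩)
  have he₀ : IsIso e₀ := by
    erw [he₀def, tF.eval F p₀.1, Adjunction.homEquiv_counit]
    simp only [Equivalence.toAdjunction_counit]
    exact IsIso.comp_isIso' (@Functor.map_isIso _ _ _ _ _ _ _ _ hv) inferInstance
  -- a section of ε
  set s : F ⟶ tF.Ψ.obj F := inv e₀ ≫
    biproduct.ι (fun q : Fin (tF.m F) => F⟦-(tF.deg F q)⟧) p₀.1 ≫ (tF.decomp F).inv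
    with hsdef
  have hsε : s ≫ tF.ε.app F = 𝟙 F := by
    rw [hsdef]
    simp only [Category.assoc]
    rw [← he₀def]
    exact IsIso.inv_hom_id e₀
  -- the connecting map vanishes
  have hδ : tF.δ.app F = 0 := by
    have h23 : tF.ε.app F ≫ tF.δ.app F = 0 := comp_distTriang_mor_zero₂₃ _ (tF.dist F)
    calc tF.δ.app F = (s ≫ tF.ε.app F) ≫ tF.δ.app F := by rw [hsε, Category.id_comp]
    _ = s ≫ (tF.ε.app F ≫ tF.δ.app F) := Category.assoc _ _ _
    _ = 0 := by rw [h23, Limits.comp_zero]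
  -- a retraction of α
  obtain ⟨(g : tF.Ψ.obj F ⟶ tF.Φ.obj F), hg⟩ := Pretriangulated.Triangle.yoneda_exact₂ _
    (inv_rot_of_distTriang _ (tF.dist F)) (𝟙 (tF.Φ.obj F)) (by
      dsimp [Triangle.invRotate]
      rw [hδ]
      simp
      erw [Functor.map_zero]
      simp
      exact Limits.zero_comp)
  have hg' : 𝟙 (tF.Φ.obj F) = tF.α.app F ≫ g := hg
  -- retract of the biproduct
  have hsr : (tF.α.app F ≫ (tF.decomp F).hom) ≫ ((tF.decomp F).inv ≫ g) = 𝟙 (tF.Φ.obj F) := by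
    rw [Category.assoc, Iso.hom_inv_id_assoc, ← hg']
  have hiso_X : ∀ f : tF.Φ.obj F ⟶ tF.Φ.obj F, IsIso f ↔ f ≠ 0 :=
    isIso_iff_ne_zero_map tF.Φ hiso_F
  have hZscalar : ∀ (p : Fin (tF.m F)) (f : Z p ⟶ Z p), ∃ c : ℂ, c • 𝟙 (Z p) = f :=
    fun p => exists_smul_id (isIso_iff_ne_zero_map (shiftFunctor T (-(tF.deg F p))) hiso_F)
  obtain ⟨p, ⟨isoXp⟩⟩ := retract_biproduct_iso Z (tF.α.app F ≫ (tF.decomp F).hom)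
    ((tF.decomp F).inv ≫ g) hsr (one_ne_zero_of_isIso_iff hiso_X)
    (exists_smul_id hiso_X) hZscalar
  -- Hom(F, Φ F) = 0
  have homXzero : ∀ u : F ⟶ tF.Φ.obj F, u = 0 := by
    intro u
    set εpost : (F ⟶ tF.Ψ.obj F) →ₗ[ℂ] (F ⟶ F) := Linear.rightComp ℂ F (tF.ε.app F)
      with hεpost
    have hsurj : Function.Surjective εpost := by
      intro w
      refine ⟨w ≫ s, ?_⟩
      rw [hεpost]
      show (w ≫ s) ≫ tF.ε.app F = w
      rw [Category.assoc, hsε, Category.comp_id]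
    have hfr : finrank ℂ (F ⟶ tF.Ψ.obj F) = finrank ℂ (F ⟶ F) := by
      rw [finrank_hom_into_PsiF hd hF tF, finrank_end_eq_one hF]
    have hinj : Function.Injective εpost :=
      (LinearMap.injective_iff_surjective_of_finrank_eq_finrank hfr).mpr hsurj
    have h12 : tF.α.app F ≫ tF.ε.app F = 0 := comp_distTriang_mor_zero₁₂ _ (tF.dist F)
    have hkill : εpost (u ≫ tF.α.app F) = εpost 0 := by
      rw [hεpost, map_zero]
      show (u ≫ tF.α.app F) ≫ tF.ε.app F = 0
      rw [Category.assoc, h12, Limits.comp_zero]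
    have huα : u ≫ tF.α.app F = 0 := hinj hkill
    calc u = u ≫ 𝟙 (tF.Φ.obj F) := (Category.comp_id u).symm
    _ = u ≫ tF.α.app F ≫ g := by rw [← hg']
    _ = (u ≫ tF.α.app F) ≫ g := (Category.assoc _ _ _).symm
    _ = 0 := by rw [huα, Limits.zero_comp]
  -- the degree must be d
  have hdeg : tF.deg F p = (d : ℤ) := by
    rcases deg_self_mem hF tF p with h | h
    · exfalso
      have hobj : F⟦-(tF.deg F p)⟧ = F⟦(0:ℤ)⟧ := by rw [h, neg_zero]
      set u : F ⟶ tF.Φ.obj F :=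
        (shiftFunctorZero T ℤ).inv.app F ≫ eqToHom hobj.symm ≫ isoXp.inv with hudef
      have hu : IsIso u := by rw [hudef]; infer_instance
      have := homXzero u
      rw [this] at hu
      have h1F : 𝟙 F ≠ (0 : F ⟶ F) := by
        intro hid
        exact one_ne_zero_of_isIso_iff hiso_F hid
      apply h1F
      rw [← IsIso.hom_inv_id (0 : F ⟶ tF.Φ.obj F), Limits.zero_comp]
    · exact h
  exact ⟨isoXp.trans (eqToIso (by
    show (shiftFunctor T (-tF.deg F p)).obj F = _
    rw [hdeg]))⟩

lemma comp_iso_ne_zero {X Y Z' : T} {f : X ⟶ Y} (hf : f ≠ 0) (i : Y ≅ Z') : f ≫ i.hom ≠ 0 := by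
  intro h
  apply hf
  calc f = (f ≫ i.hom) ≫ i.inv := by rw [Category.assoc, Iso.hom_inv_id, Category.comp_id]
  _ = 0 := by rw [h, Limits.zero_comp]

lemma iso_comp_ne_zero {X Y Z' : T} (i : Z' ≅ X) {f : X ⟶ Y} (hf : f ≠ 0) : i.hom ≫ f ≠ 0 := by
  intro h
  apply hf
  calc f = i.inv ≫ (i.hom ≫ f) := by rw [Iso.inv_hom_id_assoc]
  _ = 0 := by rw [h, Limits.comp_zero]

end Aux

/-- Let `X` be a smooth complex projective Calabi-Yau variety of
dimension `d ≥ 2` and let `E`, `F` be spherical objects of `D(X)` whose spherical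
twists commute and which are not orthogonal (`Hom(E, F[i]) ≠ 0` for some `i`).
Then `Φ_E(F) ≅ F⟦-d⟧`. -/
theorem twist_of_nonorthogonal_is_shift
    [HomFiniteBounded T] (d : ℕ) (hd : 2 ≤ d) [CalabiYau T (d : ℤ)]
    {E F : T} (hE : IsSpherical (d : ℤ) E) (hF : IsSpherical (d : ℤ) F)
    (tE : SphericalTwist E) (tF : SphericalTwist F)
    (hcomm : Nonempty (tF.Φ ⋙ tE.Φ ≅ tE.Φ ⋙ tF.Φ))
    (hnorth : ∃ (i : ℤ) (f : E ⟶ F⟦i⟧), f ≠ 0) :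
    Nonempty (tE.Φ.obj F ≅ F⟦-(d : ℤ)⟧) := by
  haveI := tE.equiv
  haveI := tF.equiv
  letI := tE.commShift
  haveI : ∀ A B : T, FiniteDimensional ℂ (A ⟶ B) := HomFiniteBounded.finite
  obtain ⟨hc⟩ := hcomm
  obtain ⟨iF⟩ := twist_self hd hF tF
  obtain ⟨iE⟩ := twist_self hd hE tE
  set C := tE.Φ.obj F with hC
  -- the twist of `C` by `F` is `C⟦-d⟧`
  have w : tF.Φ.obj C ≅ C⟦-(d:ℤ)⟧ :=
    (hc.app F).symm ≪≫ tE.Φ.mapIso iF ≪≫ (tE.Φ.commShiftIso (-(d:ℤ))).app F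
  -- no maps C ⟶ C⟦n⟧ for n ∉ {0, d}
  have homCzero : ∀ (n : ℤ), n ≠ 0 → n ≠ (d:ℤ) → ∀ u : C ⟶ C⟦n⟧, u = 0 := by
    intro n h0 hdn u
    have i1 : tE.Φ.obj (F⟦n⟧) ≅ C⟦n⟧ := (tE.Φ.commShiftIso n).app F
    obtain ⟨g', hg'⟩ := tE.Φ.map_surjective (u ≫ i1.inv)
    have hgz : g' = 0 := hF.2.2 n h0 hdn g'
    have hu0 : u ≫ i1.inv = 0 := by rw [← hg', hgz, Functor.map_zero]
    calc u = (u ≫ i1.inv) ≫ i1.hom := by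
          rw [Category.assoc, Iso.inv_hom_id, Category.comp_id]
    _ = 0 := by rw [hu0, Limits.zero_comp]
  -- the connecting map of the twist triangle at C vanishes
  have hδC : tF.δ.app C = 0 := by
    set h : (tF.Φ.obj C)⟦(1:ℤ)⟧ ⟶ C⟦(1:ℤ)-(d:ℤ)⟧ :=
      (shiftFunctor T (1:ℤ)).map w.hom ≫
        (shiftFunctorAdd' T (-(d:ℤ)) 1 (1-(d:ℤ)) (by ring)).inv.app C with hhdef
    haveI : IsIso h := by rw [hhdef]; infer_instance
    have hcomp : tF.δ.app C ≫ h = 0 :=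
      homCzero (1-(d:ℤ)) (by omega) (by omega) (tF.δ.app C ≫ h)
    have h0 : tF.δ.app C ≫ h = 0 ≫ h := by rw [hcomp, Limits.zero_comp]
    exact (cancel_mono h).mp h0
  -- a section of the evaluation map at C
  obtain ⟨(sC : C ⟶ tF.Ψ.obj C), hsC⟩ := Pretriangulated.Triangle.coyoneda_exact₃ _ (tF.dist C) (𝟙 C)
    (by show 𝟙 C ≫ tF.δ.app C = 0; rw [hδC, Limits.comp_zero])
  have hsC' : 𝟙 C = sC ≫ tF.ε.app C := hsC
  have hretr : (sC ≫ (tF.decomp C).hom) ≫ ((tF.decomp C).inv ≫ tF.ε.app C) = 𝟙 C := by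
    rw [Category.assoc, Iso.hom_inv_id_assoc, ← hsC']
  -- scalar endomorphism properties
  have hiso_F : ∀ f : F ⟶ F, IsIso f ↔ f ≠ 0 :=
    isIso_iff_ne_zero_of_finrank_one (finrank_end_eq_one hF)
  have hiso_C : ∀ f : C ⟶ C, IsIso f ↔ f ≠ 0 := isIso_iff_ne_zero_map tE.Φ hiso_F
  have hZscalar : ∀ (p : Fin (tF.m C)) (f : F⟦-(tF.deg C p)⟧ ⟶ F⟦-(tF.deg C p)⟧),
      ∃ c : ℂ, c • 𝟙 (F⟦-(tF.deg C p)⟧) = f :=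
    fun p => exists_smul_id (isIso_iff_ne_zero_map (shiftFunctor T (-(tF.deg C p))) hiso_F)
  obtain ⟨p, ⟨isoCp⟩⟩ := retract_biproduct_iso (fun p : Fin (tF.m C) => F⟦-(tF.deg C p)⟧)
    (sC ≫ (tF.decomp C).hom) ((tF.decomp C).inv ≫ tF.ε.app C) hretr
    (one_ne_zero_of_isIso_iff hiso_C) (exists_smul_id hiso_C) hZscalar
  set n := tF.deg C p with hn
  -- transport nonvanishing of Hom(E, F⟦j⟧) along the twist
  have key : ∀ j j' : ℤ, j' = j + ((d:ℤ) - n) →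
      (∃ f : E ⟶ F⟦j⟧, f ≠ 0) → (∃ f : E ⟶ F⟦j'⟧, f ≠ 0) := by
    intro j j' hj ⟨f, hf⟩
    have h1 : tE.Φ.map f ≠ 0 := fun h0 => hf (tE.Φ.map_eq_zero_iff.mp h0)
    have h2 : iE.inv ≫ tE.Φ.map f ≫ ((tE.Φ.commShiftIso j).app F).hom ≫
        (shiftFunctor T j).map isoCp.hom ≫
        (shiftFunctorAdd' T (-n) j (-n+j) rfl).inv.app F ≠ 0 := by
      apply iso_comp_ne_zero iE.symm
      have := comp_iso_ne_zero (comp_iso_ne_zero (comp_iso_ne_zero h1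
        ((tE.Φ.commShiftIso j).app F)) ((shiftFunctor T j).mapIso isoCp))
        ((shiftFunctorAdd' T (-n) j (-n+j) rfl).symm.app F)
      simpa [Category.assoc] using this
    set adj := (shiftEquiv' T (-(d:ℤ)) (d:ℤ) (by ring)).toAdjunction
    set f5 := (adj.homEquiv E (F⟦-n+j⟧)) (iE.inv ≫ tE.Φ.map f ≫
        ((tE.Φ.commShiftIso j).app F).hom ≫ (shiftFunctor T j).map isoCp.hom ≫
        (shiftFunctorAdd' T (-n) j (-n+j) rfl).inv.app F) with hf5
    have h5 : f5 ≠ 0 := by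
      intro h0
      apply h2
      have := congrArg (adj.homEquiv E (F⟦-n+j⟧)).symm (hf5.symm.trans h0)
      rw [Equiv.symm_apply_apply] at this
      erw [this, Adjunction.homEquiv_counit, Functor.map_zero, Limits.zero_comp]
      rfl
    have h6 : f5 ≫ (shiftFunctorAdd' T (-n+j) (d:ℤ) (-n+j+(d:ℤ)) rfl).inv.app F ≫
        eqToHom (show F⟦-n+j+(d:ℤ)⟧ = F⟦j'⟧ by rw [hj]; ring_nf) ≠ 0 := by
      have := comp_iso_ne_zero (comp_iso_ne_zero h5
        ((shiftFunctorAdd' T (-n+j) (d:ℤ) (-n+j+(d:ℤ)) rfl).symm.app F))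
        (eqToIso (show F⟦-n+j+(d:ℤ)⟧ = F⟦j'⟧ by rw [hj]; ring_nf))
      exact fun h => this ((Category.assoc _ _ _).trans h)
    exact ⟨_, h6⟩
  -- the degree is d
  have hnd : n = (d:ℤ) := by
    by_contra hne
    obtain ⟨N, hN⟩ := HomFiniteBounded.bounded E F
    obtain ⟨j₀, f₀, hf₀⟩ := hnorth
    set t : ℤ := (d:ℤ) - n with ht
    have ht0 : t ≠ 0 := fun h => hne (by omega)
    have iter : ∀ k : ℕ, ∃ f : E ⟶ F⟦j₀ + (k:ℤ) * t⟧, f ≠ 0 := by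
      intro k
      induction k with
      | zero =>
          have he : j₀ + ((0:ℕ):ℤ) * t = j₀ := by push_cast; ring
          rw [he]
          exact ⟨f₀, hf₀⟩
      | succ m ih =>
          exact key (j₀ + (m:ℤ) * t) (j₀ + ((m+1 : ℕ):ℤ) * t) (by push_cast; ring) ih
    set k : ℕ := N + j₀.natAbs + 1 with hk
    obtain ⟨f, hf⟩ := iter k
    apply hf
    apply hN
    have h1t : (1:ℤ) ≤ |t| := Int.one_le_abs ht0
    have habs : |(k:ℤ) * t| ≤ |j₀ + (k:ℤ) * t| + |j₀| := by
      have := abs_add_le (j₀ + (k:ℤ) * t) (-j₀)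
      simpa [add_comm, add_left_comm] using this
    have hkt : (k:ℤ) ≤ |(k:ℤ) * t| := by
      rw [abs_mul, abs_of_nonneg (by positivity : (0:ℤ) ≤ (k:ℤ))]
      nlinarith
    have hj₀ : |j₀| ≤ (j₀.natAbs : ℤ) := by rw [Int.abs_eq_natAbs]
    omega
  exact ⟨isoCp.trans (eqToIso (by
    show (shiftFunctor T (-n)).obj F = _
    rw [hnd]))⟩

end SphericalPaper
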